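/- Let p be an odd prime and q = p^f a power of p with q > 1. Let Q be a finite commutative group of order q and exponent p (an elementary abelian p-group), and let V be a finite-dimensional complex representation of Q whose character χ satisfies χ(1) = 2q-1 and χ(g) = q-1 for every g ≠ 1 (equivalently, the trivial character of Q occurs in V with multiplicity q and every nontrivial character of Q occurs with multiplicity exactly 1). Then V is tensor indecomposable: V is not isomorphic, as a representation of Q, to a tensor product X₁ ⊗ X₂ of two representations X₁, X₂ of Q each of dimension ≥ 2. -/

import Mathlib

open CategoryTheory MonoidalCategory

open Finset Module CategoryTheory MonoidalCategory

/-- Sum of a nontrivial character over a finite abelian group vanishes. -/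
lemma sum_zmodChar_eq_zero {A : Type*} [AddCommGroup A] [Fintype A] {p : ℕ} [NeZero p] {ζ : ℂ}
    (hζ : IsPrimitiveRoot ζ p) (ψ : A →+ ZMod p) (h : ∃ a, ψ a ≠ 0) :
    ∑ a : A, AddChar.zmodChar p hζ.pow_eq_one (ψ a) = 0 := by
  have key : (AddChar.zmodChar p hζ.pow_eq_one).compAddMonoidHom ψ ≠ 0 := by
    obtain ⟨a, ha⟩ := h
    intro hcontra
    have h1 : AddChar.zmodChar p hζ.pow_eq_one (ψ a) = 1 := by
      have := DFunLike.congr_fun hcontra a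
      simpa using this
    rw [AddChar.zmodChar_apply] at h1
    have hval : (ψ a).val ≠ 0 := by simpa [ZMod.val_eq_zero] using ha
    exact hζ.pow_ne_one_of_pos_of_lt hval (ZMod.val_lt _) h1
  simpa using AddChar.sum_eq_zero_iff_ne_zero.2 key

/-- The monoid hom `Q → ℂ` attached to a `ZMod p`-linear functional on `Additive Q`. -/
noncomputable def dchar (p : ℕ) [NeZero p] {ζ : ℂ} (hζ : ζ ^ p = 1) (Q : Type) [CommGroup Q]
    [Module (ZMod p) (Additive Q)]
    (φ : Module.Dual (ZMod p) (Additive Q)) : Q →* ℂ where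
  toFun g := AddChar.zmodChar p hζ (φ (Additive.ofMul g))
  map_one' := by simp
  map_mul' g h := by
    show AddChar.zmodChar p hζ (φ (Additive.ofMul (g * h))) = _
    rw [show Additive.ofMul (g * h) = Additive.ofMul g + Additive.ofMul h from rfl, map_add,
      AddChar.map_add_eq_mul]

/-- The associated one-dimensional representation. -/
noncomputable def repOf (p : ℕ) [NeZero p] {ζ : ℂ} (hζ : ζ ^ p = 1) (Q : Type) [CommGroup Q]
    [Module (ZMod p) (Additive Q)]
    (φ : Module.Dual (ZMod p) (Additive Q)) : FDRep ℂ Q :=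
  FDRep.of (V := ℂ)
    (((algebraMap ℂ (Module.End ℂ ℂ)) : ℂ →* Module.End ℂ ℂ).comp (dchar p hζ Q φ))

lemma char_repOf (p : ℕ) [NeZero p] {ζ : ℂ} (hζ : ζ ^ p = 1) (Q : Type) [CommGroup Q]
    [Module (ZMod p) (Additive Q)]
    (φ : Module.Dual (ZMod p) (Additive Q)) (g : Q) :
    (repOf p hζ Q φ).character g = AddChar.zmodChar p hζ (φ (Additive.ofMul g)) := by
  set c := AddChar.zmodChar p hζ (φ (Additive.ofMul g)) with hc
  show LinearMap.trace ℂ ℂ _ = c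
  have : ((repOf p hζ Q φ).ρ g : ℂ →ₗ[ℂ] ℂ) = c • LinearMap.id := by
    ext
    show ((algebraMap ℂ (Module.End ℂ ℂ)) (dchar p hζ Q φ g)) 1 = c * LinearMap.id 1
    simp [dchar, Module.algebraMap_end_apply, ← hc]
    exact (mul_one c).symm
  rw [this]
  exact (show LinearMap.trace ℂ ℂ (c • (LinearMap.id : ℂ →ₗ[ℂ] ℂ)) = c by simp)


/-- Helper: convolution identity with a multiplicity `≥ 2` forces a contradiction. -/
lemma conv_case {D : Type} [AddCommGroup D] [Fintype D] [DecidableEq D]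
    (n₁ n₂ : D → ℕ)
    (h1 : ∀ μ : D, μ ≠ 0 → ∑ φ : D, n₁ φ * n₂ (μ - φ) = 1)
    (hb : 2 ≤ ∑ φ : D, n₂ φ)
    (φ₀ : D) (h2 : 2 ≤ n₁ φ₀)
    (hnt : ∃ μ : D, μ ≠ 0) : False := by
  -- n₂ vanishes off -φ₀
  have hzero : ∀ ψ : D, ψ ≠ -φ₀ → n₂ ψ = 0 := by
    intro ψ hψ
    by_contra h
    have hμ : φ₀ + ψ ≠ 0 := by
      intro hc; apply hψ; linear_combination (norm := abel_nf) hc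
    have hle : n₁ φ₀ * n₂ ((φ₀ + ψ) - φ₀) ≤ ∑ φ : D, n₁ φ * n₂ ((φ₀ + ψ) - φ) :=
      Finset.single_le_sum (f := fun φ => n₁ φ * n₂ ((φ₀ + ψ) - φ))
        (fun _ _ => Nat.zero_le _) (mem_univ φ₀)
    rw [h1 _ hμ] at hle
    have : 2 * 1 ≤ n₁ φ₀ * n₂ ((φ₀ + ψ) - φ₀) := by
      apply Nat.mul_le_mul h2
      simpa [add_sub_cancel_left] using Nat.one_le_iff_ne_zero.mpr (by simpa using h)
    omega
  have hsum : ∑ φ : D, n₂ φ = n₂ (-φ₀) := by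
    apply Finset.sum_eq_single
    · intro b _ hb'; exact hzero b hb'
    · intro h; exact absurd (mem_univ _) h
  have hb2 : 2 ≤ n₂ (-φ₀) := hsum ▸ hb
  obtain ⟨μ, hμ⟩ := hnt
  have := h1 μ hμ
  have hone : ∑ φ : D, n₁ φ * n₂ (μ - φ) = n₁ (μ + φ₀) * n₂ (μ - (μ + φ₀)) := by
    apply Finset.sum_eq_single
    · intro b _ hb'
      have : μ - b ≠ -φ₀ := by
        intro hc; apply hb'; linear_combination (norm := abel_nf) -hc
      rw [hzero _ this, Nat.mul_zero]
    · intro h; exact absurd (mem_univ _) h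
  rw [hone, show μ - (μ + φ₀) = -φ₀ by abel] at this
  have := Nat.eq_one_of_mul_eq_one_left this
  omega

lemma conv_lemma {D : Type} [AddCommGroup D] [Fintype D] [DecidableEq D] (n₁ n₂ : D → ℕ)
    (hcard : 3 ≤ Fintype.card D)
    (h0 : ∑ φ : D, n₁ φ * n₂ (0 - φ) = Fintype.card D)
    (h1 : ∀ μ : D, μ ≠ 0 → ∑ φ : D, n₁ φ * n₂ (μ - φ) = 1)
    (ha : 2 ≤ ∑ φ : D, n₁ φ) (hb : 2 ≤ ∑ φ : D, n₂ φ) : False := by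
  have hnt : ∃ μ : D, μ ≠ 0 := by
    have : Nontrivial D := Fintype.one_lt_card_iff_nontrivial.mp (by omega)
    exact exists_ne 0
  -- symmetric convolution
  have hsymm : ∀ μ : D, ∑ φ : D, n₂ φ * n₁ (μ - φ) = ∑ φ : D, n₁ φ * n₂ (μ - φ) := by
    intro μ
    refine Fintype.sum_equiv (Equiv.subLeft μ) _ _ fun φ => ?_
    simp [Equiv.subLeft, sub_sub_cancel, mul_comm]
  by_cases hc1 : ∃ φ₀, 2 ≤ n₁ φ₀
  · obtain ⟨φ₀, h2⟩ := hc1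
    exact conv_case n₁ n₂ h1 hb φ₀ h2 hnt
  by_cases hc2 : ∃ φ₀, 2 ≤ n₂ φ₀
  · obtain ⟨φ₀, h2⟩ := hc2
    exact conv_case n₂ n₁ (fun μ hμ => (hsymm μ).trans (h1 μ hμ)) ha φ₀ h2 hnt
  push_neg at hc1 hc2
  -- all multiplicities ≤ 1, and the 0-convolution equals the full cardinality
  have hterm : ∀ φ : D, n₁ φ * n₂ (0 - φ) = 1 := by
    intro φ₀
    by_contra h
    have h0' : n₁ φ₀ * n₂ (0 - φ₀) = 0 := by
      have ha1 : n₁ φ₀ ≤ 1 := Nat.lt_succ_iff.mp (hc1 φ₀)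
      have ha2 : n₂ (0 - φ₀) ≤ 1 := Nat.lt_succ_iff.mp (hc2 (0 - φ₀))
      have := Nat.mul_le_mul ha1 ha2
      omega
    have hle : ∑ φ : D, n₁ φ * n₂ (0 - φ) ≤ ∑ φ ∈ univ.erase φ₀, 1 := by
      rw [← Finset.add_sum_erase _ _ (mem_univ φ₀), h0', Nat.zero_add]
      apply Finset.sum_le_sum
      intro i _
      exact Nat.le_trans (Nat.mul_le_mul (hc1 i |> Nat.lt_succ_iff.mp) (Nat.le_refl _)) (by
        simpa using Nat.lt_succ_iff.mp (hc2 (0 - i)))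
    rw [h0] at hle
    rw [Finset.sum_const, smul_eq_mul, mul_one, Finset.card_erase_of_mem (mem_univ φ₀),
      Finset.card_univ] at hle
    omega
  have hn1 : ∀ φ : D, n₁ φ = 1 := fun φ => Nat.eq_one_of_mul_eq_one_right (hterm φ)
  have hn2 : ∀ φ : D, n₂ φ = 1 := by
    intro φ
    have := Nat.eq_one_of_mul_eq_one_left (hterm (-φ))
    simpa using this
  obtain ⟨μ, hμ⟩ := hnt
  have := h1 μ hμ
  rw [Finset.sum_congr rfl (fun φ _ => by rw [hn1 φ, hn2 (μ - φ)])] at this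
  simp [Finset.card_univ] at this
  omega

section Fourier

variable (p : ℕ) [Fact p.Prime] {ζ : ℂ} (hζ : IsPrimitiveRoot ζ p)
  (Q : Type) [CommGroup Q] [Fintype Q] [Module (ZMod p) (Additive Q)]
  [Fintype (Module.Dual (ZMod p) (Additive Q))]

local notation "M" => Additive Q
local notation "D" => Module.Dual (ZMod p) (Additive Q)
local notation "ee" => AddChar.zmodChar p hζ.pow_eq_one

set_option linter.unusedSectionVars false

open Classical in
/-- Sum over the group of a character attached to a functional. -/
lemma sum_over_Q (μ : D) :
    ∑ g : Q, ee (μ (Additive.ofMul g)) = if μ = 0 then (Fintype.card Q : ℂ) else 0 := by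
  rw [show ∑ g : Q, ee (μ (Additive.ofMul g)) = ∑ a : M, ee (μ a) from
    Fintype.sum_equiv Additive.ofMul _ _ fun g => rfl]
  split_ifs with h
  · subst h; simp [Finset.card_univ]
  · refine sum_zmodChar_eq_zero hζ μ.toAddMonoidHom ?_
    by_contra hc
    push_neg at hc
    exact h (by ext a; exact hc a)

open Classical in
/-- Sum over the dual of evaluation at a point. -/
lemma sum_over_D (x : M) :
    ∑ φ : D, ee (φ x) =
      if x = 0 then (Fintype.card (Module.Dual (ZMod p) (Additive Q)) : ℂ) else 0 := by
  split_ifs with h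
  · subst h; simp [Finset.card_univ]
  · refine sum_zmodChar_eq_zero hζ
      (AddMonoidHom.mk' (fun φ : D => φ x) (fun φ₁ φ₂ => rfl)) ?_
    by_contra hc
    push_neg at hc
    exact h (((Module.forall_dual_apply_eq_zero_iff (ZMod p) x).mp fun φ => hc φ))

/-- The dual has the same cardinality. -/
lemma card_dual_eq : Fintype.card (Module.Dual (ZMod p) (Additive Q)) = Fintype.card Q := by
  have h1 : Fintype.card (Module.Dual (ZMod p) (Additive Q)) =
      Fintype.card (ZMod p) ^ finrank (ZMod p) (Module.Dual (ZMod p) (Additive Q)) :=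
    card_eq_pow_finrank
  have h2 : Fintype.card M = Fintype.card (ZMod p) ^ finrank (ZMod p) M :=
    card_eq_pow_finrank
  rw [h1, Subspace.dual_finrank_eq, ← h2]
  exact Fintype.card_congr Additive.toMul

/-- The multiplicity of the character `φ` in `X`. -/
noncomputable def mult (X : FDRep ℂ Q) (φ : Module.Dual (ZMod p) (Additive Q)) : ℕ :=
  finrank ℂ (Representation.invariants (repOf p hζ.pow_eq_one Q (-φ) ⊗ X).ρ)

lemma card_Q_ne_zero : (Fintype.card Q : ℂ) ≠ 0 :=
  Nat.cast_ne_zero.mpr Fintype.card_ne_zero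

lemma key_avg (X : FDRep ℂ Q) (φ : D) :
    ∑ g : Q, ee ((-φ) (Additive.ofMul g)) * X.character g =
      (Fintype.card Q : ℂ) * mult p hζ Q X φ := by
  haveI : Invertible (Fintype.card Q : ℂ) := invertibleOfNonzero (card_Q_ne_zero Q)
  have havg := FDRep.average_char_eq_finrank_invariants (repOf p hζ.pow_eq_one Q (-φ) ⊗ X)
  have hch : ∀ g : Q, (repOf p hζ.pow_eq_one Q (-φ) ⊗ X).character g =
      ee ((-φ) (Additive.ofMul g)) * X.character g := by
    intro g
    rw [FDRep.char_tensor]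
    simp only [Pi.mul_apply]
    rw [char_repOf]
  rw [Finset.sum_congr rfl fun g _ => hch g] at havg
  have h2 : (Fintype.card Q : ℂ) *
      (⅟(Fintype.card Q : ℂ) • ∑ g : Q, ee ((-φ) (Additive.ofMul g)) * X.character g) =
      (Fintype.card Q : ℂ) * (mult p hζ Q X φ : ℂ) := by
    rw [invOf_eq_inv, smul_eq_mul, ← Nat.card_eq_fintype_card, havg]; rfl
  rw [smul_eq_mul, ← mul_assoc, mul_invOf_self, one_mul] at h2
  exact h2

lemma inversion (X : FDRep ℂ Q) (g : Q) :
    X.character g = ∑ φ : D, (mult p hζ Q X φ : ℂ) * ee (φ (Additive.ofMul g)) := by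
  classical
  have hq := card_Q_ne_zero Q
  apply mul_left_cancel₀ hq
  symm
  have H : ∀ h : Q, ∑ φ : D, ee (φ (Additive.ofMul g)) * ee ((-φ) (Additive.ofMul h)) =
      if h = g then (Fintype.card Q : ℂ) else 0 := by
    intro h
    have heq : ∀ φ : D, ee (φ (Additive.ofMul g)) * ee ((-φ) (Additive.ofMul h)) =
        ee (φ (Additive.ofMul g - Additive.ofMul h)) := by
      intro φ
      rw [← AddChar.map_add_eq_mul]
      congr 1
      rw [map_sub]
      show φ _ + (- φ _) = _
      ring
    rw [Finset.sum_congr rfl fun φ _ => heq φ, sum_over_D p hζ Q, card_dual_eq p Q]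
    by_cases hgh : h = g
    · subst hgh; simp
    · rw [if_neg (fun hc => hgh (Additive.ofMul.injective (sub_eq_zero.mp hc)).symm), if_neg hgh]
  calc (Fintype.card Q : ℂ) * ∑ φ : D, (mult p hζ Q X φ : ℂ) * ee (φ (Additive.ofMul g))
      = ∑ φ : D, ((Fintype.card Q : ℂ) * mult p hζ Q X φ) * ee (φ (Additive.ofMul g)) := by
        rw [Finset.mul_sum]; exact Finset.sum_congr rfl fun φ _ => by ring
    _ = ∑ φ : D, (∑ h : Q, ee ((-φ) (Additive.ofMul h)) * X.character h) *
          ee (φ (Additive.ofMul g)) := by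
        exact Finset.sum_congr rfl fun φ _ => by rw [← key_avg p hζ Q X φ]
    _ = ∑ φ : D, ∑ h : Q, X.character h *
          (ee (φ (Additive.ofMul g)) * ee ((-φ) (Additive.ofMul h))) := by
        refine Finset.sum_congr rfl fun φ _ => ?_
        rw [Finset.sum_mul]
        exact Finset.sum_congr rfl fun h _ => by ring
    _ = ∑ h : Q, ∑ φ : D, X.character h *
          (ee (φ (Additive.ofMul g)) * ee ((-φ) (Additive.ofMul h))) := Finset.sum_comm
    _ = ∑ h : Q, X.character h * (if h = g then (Fintype.card Q : ℂ) else 0) := by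
        exact Finset.sum_congr rfl fun h _ => by rw [← Finset.mul_sum, H h]
    _ = (Fintype.card Q : ℂ) * X.character g := by
        simp only [mul_ite, mul_zero]
        rw [Finset.sum_ite_eq' Finset.univ g (fun h => X.character h * (Fintype.card Q : ℂ))]
        simp [mul_comm]

end Fourier

/-- Let `p` be an odd prime, `q = p^f > 1`, `Q` an elementary abelian `p`-group of
order `q`, and `V` a finite-dimensional complex representation of `Q` with `χ(1) = 2q - 1` and
`χ(g) = q - 1` for all `g ≠ 1`.  Then `V` is tensor indecomposable: it is not isomorphic (as a
representation of `Q`) to a tensor product `X₁ ⊗ X₂` with `dim Xᵢ ≥ 2`. -/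
theorem tensor_indecomposable
    (p f : ℕ) (hp : p.Prime) (hodd : Odd p) (hf : 0 < f)
    (Q : Type) [CommGroup Q] [Fintype Q]
    (hcard : Fintype.card Q = p ^ f)
    (hexp : ∀ g : Q, g ^ p = 1)
    (V : FDRep ℂ Q)
    (hdim : Module.finrank ℂ V = 2 * p ^ f - 1)
    (htr : ∀ g : Q, g ≠ 1 → FDRep.character V g = (p ^ f : ℂ) - 1) :
    ¬ ∃ X₁ X₂ : FDRep ℂ Q,
        2 ≤ Module.finrank ℂ X₁ ∧ 2 ≤ Module.finrank ℂ X₂ ∧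
        Nonempty (V ≅ X₁ ⊗ X₂) := by
  classical
  rintro ⟨X₁, X₂, hd1, hd2, ⟨iso⟩⟩
  haveI : Fact p.Prime := ⟨hp⟩
  haveI : NeZero p := ⟨hp.pos.ne'⟩
  haveI : Module (ZMod p) (Additive Q) := AddCommGroup.zmodModule (n := p) (by
    intro x
    have h := ofMul_pow p (Additive.toMul x)
    rw [hexp] at h
    exact h.symm)
  haveI : Finite (Module.Dual (ZMod p) (Additive Q)) := by
    exact Finite.of_injective
      (fun φ : Module.Dual (ZMod p) (Additive Q) => (φ : Additive Q → ZMod p))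
      DFunLike.coe_injective
  haveI : Fintype (Module.Dual (ZMod p) (Additive Q)) := Fintype.ofFinite _
  set ζ : ℂ := Complex.exp (2 * Real.pi * Complex.I / p) with hζdef
  have hζ : IsPrimitiveRoot ζ p := Complex.isPrimitiveRoot_exp p hp.pos.ne'
  set ee := AddChar.zmodChar p hζ.pow_eq_one with hee
  set qC : ℂ := (p : ℂ) ^ f with hqC
  have hpowpos : 0 < p ^ f := pow_pos hp.pos f
  have hcardC : (Fintype.card Q : ℂ) = qC := by rw [hcard]; push_cast; ring
  have hqne : qC ≠ 0 := by
    rw [← hcardC]; exact card_Q_ne_zero Q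
  -- character values of V
  have hchar1 : V.character 1 = 2 * qC - 1 := by
    rw [FDRep.char_one, hdim, Nat.cast_sub (by omega)]
    push_cast; ring
  have hchiV : ∀ g : Q, V.character g = X₁.character g * X₂.character g := by
    intro g
    rw [FDRep.char_iso iso, FDRep.char_tensor]
    rfl
  -- the multiplicity functions
  set n₁ := mult p hζ Q X₁ with hn₁
  set n₂ := mult p hζ Q X₂ with hn₂
  set nV := mult p hζ Q V with hnV
  -- Fourier coefficients of V
  have hkey : ∀ μ : (Module.Dual (ZMod p) (Additive Q)), (Fintype.card Q : ℂ) * (nV μ : ℂ) =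
      V.character 1 + ((if μ = 0 then (Fintype.card Q : ℂ) else 0) - 1) * (qC - 1) := by
    intro μ
    rw [← key_avg p hζ Q V μ]
    rw [← Finset.add_sum_erase _ _ (Finset.mem_univ (1 : Q))]
    congr 1
    · rw [show ((-μ) (Additive.ofMul (1 : Q))) = 0 by simp [ofMul_one], AddChar.map_zero_eq_one,
        one_mul]
    · have hterm : ∀ g ∈ Finset.univ.erase (1 : Q),
          ee ((-μ) (Additive.ofMul g)) * V.character g
            = ee ((-μ) (Additive.ofMul g)) * (qC - 1) := by
        intro g hg
        rw [htr g (Finset.ne_of_mem_erase hg)]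
      rw [Finset.sum_congr rfl hterm, ← Finset.sum_mul,
        Finset.sum_erase_eq_sub (Finset.mem_univ (1 : Q)), sum_over_Q p hζ Q (-μ)]
      rw [show ((-μ) (Additive.ofMul (1 : Q))) = 0 by simp [ofMul_one], AddChar.map_zero_eq_one]
      simp only [neg_eq_zero]
  have hV0 : nV 0 = p ^ f := by
    have h := hkey 0
    rw [if_pos rfl, hchar1, hcardC] at h
    have h2 : qC * (nV 0 : ℂ) = qC * ((p ^ f : ℕ) : ℂ) := by
      rw [h]; push_cast; ring
    have := mul_left_cancel₀ hqne h2
    exact_mod_cast this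
  have hV1 : ∀ μ : (Module.Dual (ZMod p) (Additive Q)), μ ≠ 0 → nV μ = 1 := by
    intro μ hμ
    have h := hkey μ
    rw [if_neg hμ, hchar1, hcardC] at h
    have h2 : qC * (nV μ : ℂ) = qC * 1 := by rw [h]; ring
    have := mul_left_cancel₀ hqne h2
    exact_mod_cast this
  -- the convolution identity
  have hconv : ∀ μ : (Module.Dual (ZMod p) (Additive Q)), ∑ φ : (Module.Dual (ZMod p) (Additive Q)), n₁ φ * n₂ (μ - φ) = nV μ := by
    intro μ
    have hC : (Fintype.card Q : ℂ) * ((∑ φ : (Module.Dual (ZMod p) (Additive Q)), n₁ φ * n₂ (μ - φ) : ℕ) : ℂ) =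
        (Fintype.card Q : ℂ) * ((nV μ : ℕ) : ℂ) := by
      have hmain : ((Fintype.card Q : ℂ)) * (nV μ : ℂ) =
          (Fintype.card Q : ℂ) * ∑ φ : (Module.Dual (ZMod p) (Additive Q)), (n₁ φ : ℂ) * (n₂ (μ - φ) : ℂ) := by
        calc ((Fintype.card Q : ℂ)) * (nV μ : ℂ)
            = ∑ g : Q, ee ((-μ) (Additive.ofMul g)) * V.character g :=
              (key_avg p hζ Q V μ).symm
          _ = ∑ g : Q, ∑ φ : (Module.Dual (ZMod p) (Additive Q)), ∑ ψ : (Module.Dual (ZMod p) (Additive Q)), (n₁ φ : ℂ) * (n₂ ψ : ℂ) *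
                (ee (φ (Additive.ofMul g)) * ee (ψ (Additive.ofMul g)) *
                  ee ((-μ) (Additive.ofMul g))) := by
              refine Finset.sum_congr rfl fun g _ => ?_
              rw [hchiV g, inversion p hζ Q X₁ g, inversion p hζ Q X₂ g, Finset.sum_mul_sum,
                Finset.mul_sum]
              refine Finset.sum_congr rfl fun φ _ => ?_
              rw [Finset.mul_sum]
              exact Finset.sum_congr rfl fun ψ _ => by ring
          _ = ∑ φ : (Module.Dual (ZMod p) (Additive Q)), ∑ ψ : (Module.Dual (ZMod p) (Additive Q)), (n₁ φ : ℂ) * (n₂ ψ : ℂ) *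
                ∑ g : Q, ee ((φ + ψ + (-μ)) (Additive.ofMul g)) := by
              rw [Finset.sum_comm]
              refine Finset.sum_congr rfl fun φ _ => ?_
              rw [Finset.sum_comm]
              refine Finset.sum_congr rfl fun ψ _ => ?_
              rw [Finset.mul_sum]
              refine Finset.sum_congr rfl fun g _ => ?_
              congr 1
              rw [← AddChar.map_add_eq_mul, ← AddChar.map_add_eq_mul]
              congr 1
          _ = ∑ φ : (Module.Dual (ZMod p) (Additive Q)), (n₁ φ : ℂ) * (n₂ (μ - φ) : ℂ) * (Fintype.card Q : ℂ) := by
              refine Finset.sum_congr rfl fun φ _ => ?_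
              rw [Finset.sum_eq_single (μ - φ)]
              · rw [sum_over_Q p hζ Q, if_pos (by abel)]
              · intro ψ _ hψ
                rw [sum_over_Q p hζ Q, if_neg, mul_zero]
                intro hc
                apply hψ
                have h3 : ψ - (μ - φ) = 0 := by rw [← hc]; abel
                exact sub_eq_zero.mp h3
              · intro h; exact absurd (Finset.mem_univ _) h
          _ = (Fintype.card Q : ℂ) * ∑ φ : (Module.Dual (ZMod p) (Additive Q)), (n₁ φ : ℂ) * (n₂ (μ - φ) : ℂ) := by
              rw [Finset.mul_sum]
              exact Finset.sum_congr rfl fun φ _ => by ring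
      push_cast
      linear_combination -hmain
    have := mul_left_cancel₀ (hcardC ▸ hqne) hC
    exact_mod_cast this
  -- dimensions
  have hsum : ∀ X : FDRep ℂ Q, ∑ φ : (Module.Dual (ZMod p) (Additive Q)), mult p hζ Q X φ = Module.finrank ℂ X := by
    intro X
    have h := inversion p hζ Q X 1
    rw [FDRep.char_one] at h
    rw [Finset.sum_congr rfl (fun φ _ => by
      rw [show (φ (Additive.ofMul (1 : Q))) = 0 by simp [ofMul_one], AddChar.map_zero_eq_one,
        mul_one])] at h
    exact_mod_cast h.symm
  -- apply the combinatorial lemma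
  have hp3 : 3 ≤ p := by
    rcases hodd with ⟨k, hk⟩
    have := hp.two_le
    omega
  have hcard3 : 3 ≤ Fintype.card (Module.Dual (ZMod p) (Additive Q)) := by
    rw [card_dual_eq p Q, hcard]
    calc 3 ≤ p := hp3
      _ ≤ p ^ f := Nat.le_self_pow hf.ne' p
  refine conv_lemma n₁ n₂ hcard3 ?_ ?_ ?_ ?_
  · rw [hconv 0, hV0, card_dual_eq p Q, hcard]
  · intro μ hμ
    rw [hconv μ, hV1 μ hμ]
  · rw [hsum X₁]; exact hd1
  · rw [hsum X₂]; exact hd2
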